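/- Let U be a finitely presented group such that the abelianization of U is trivial and such that every finitely presented group embeds into U (i.e., for every finitely presented group P there is an injective group homomorphism P → U). Then there exists a group homomorphism σ : U → U that is injective but not surjective. -/

import Mathlib

/-- A group is finitely presented if it is isomorphic to a presented group on finitely
many generators with finitely many relators. -/
def IsFinitelyPresented (G : Type*) [Group G] : Prop :=
  ∃ (n : ℕ) (rels : Set (FreeGroup (Fin n))),
    rels.Finite ∧ Nonempty (G ≃* PresentedGroup rels)

/-- If `U` is a finitely presented group with trivial abelianization into which every
finitely presented group embeds, then `U` admits an injective non-surjective
endomorphism. -/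
theorem exists_injective_not_surjective_endo (U : Type) [Group U]
    (hfp : IsFinitelyPresented U)
    (htriv : Subsingleton (Abelianization U))
    (huniv : ∀ (P : Type) [Group P], IsFinitelyPresented P →
      ∃ f : P →* U, Function.Injective f) :
    ∃ σ : U →* U, Function.Injective σ ∧ ¬ Function.Surjective σ := by
  obtain ⟨n, rels, hfin, ⟨e⟩⟩ := hfp
  -- the inclusion of free groups
  set j : FreeGroup (Fin n) →* FreeGroup (Fin (n + 1)) :=
    FreeGroup.map Fin.castSucc with hj
  set rels' : Set (FreeGroup (Fin (n + 1))) := j '' rels with hrels'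
  have hfin' : rels'.Finite := hfin.image _
  -- the "free product U * ℤ"
  have hPfp : IsFinitelyPresented (PresentedGroup rels') :=
    ⟨n + 1, rels', hfin', ⟨MulEquiv.refl _⟩⟩
  obtain ⟨f, hf⟩ := huniv (PresentedGroup rels') hPfp
  -- lift helper: lifting g over j
  have lift_map : ∀ {G : Type} [Group G] (g : Fin (n + 1) → G) (r : FreeGroup (Fin n)),
      FreeGroup.lift g (j r) = FreeGroup.lift (g ∘ Fin.castSucc) r := by
    intro G _ g r
    have : (FreeGroup.lift g).comp j = FreeGroup.lift (g ∘ Fin.castSucc) := by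
      apply FreeGroup.ext_hom
      intro a
      simp [hj]
    exact DFunLike.congr_fun this r
  -- the embedding ι : PresentedGroup rels →* PresentedGroup rels'
  have hι : ∀ r ∈ rels,
      FreeGroup.lift (fun i : Fin n => (PresentedGroup.of (rels := rels') i.castSucc)) r = 1 := by
    intro r hr
    have h1 : (fun i : Fin n => (PresentedGroup.of (rels := rels') i.castSucc))
        = (PresentedGroup.mk rels').comp j ∘ FreeGroup.of := by
      funext i; simp [PresentedGroup.of, hj]
    have h2 : FreeGroup.lift (fun i : Fin n => (PresentedGroup.of (rels := rels') i.castSucc))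
        = (PresentedGroup.mk rels').comp j := by
      apply FreeGroup.ext_hom
      intro a
      rw [FreeGroup.lift_apply_of]
      exact congrFun h1 a
    rw [h2]
    show QuotientGroup.mk (j r) = 1
    refine (QuotientGroup.eq_one_iff _).mpr ?_
    exact Subgroup.subset_normalClosure ⟨r, hr, rfl⟩
  set ι : PresentedGroup rels →* PresentedGroup rels' := PresentedGroup.toGroup hι with hιdef
  -- the retraction π : PresentedGroup rels' →* PresentedGroup rels
  have hπ : ∀ r' ∈ rels',
      FreeGroup.lift (Fin.snoc (fun i : Fin n => (PresentedGroup.of (rels := rels) i)) 1) r'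
        = 1 := by
    rintro r' ⟨r, hr, rfl⟩
    rw [lift_map]
    have : ((Fin.snoc (fun i : Fin n => (PresentedGroup.of (rels := rels) i)) 1) ∘ Fin.castSucc)
        = fun i : Fin n => (PresentedGroup.of (rels := rels) i) := by
      funext i; simp [Fin.snoc_castSucc]
    rw [this]
    have h2 : FreeGroup.lift (fun i : Fin n => (PresentedGroup.of (rels := rels) i))
        = PresentedGroup.mk rels := by
      apply FreeGroup.ext_hom; intro a; simp [PresentedGroup.of]
    rw [h2]
    show QuotientGroup.mk r = 1
    refine (QuotientGroup.eq_one_iff _).mpr ?_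
    exact Subgroup.subset_normalClosure hr
  set π : PresentedGroup rels' →* PresentedGroup rels := PresentedGroup.toGroup hπ with hπdef
  have hretr : π.comp ι = MonoidHom.id _ := by
    ext x
    simp [hιdef, hπdef, PresentedGroup.toGroup.of, Fin.snoc_castSucc]
  have hιinj : Function.Injective ι := by
    intro a b hab
    have := DFunLike.congr_fun hretr a
    have h2 := DFunLike.congr_fun hretr b
    simp only [MonoidHom.comp_apply, MonoidHom.id_apply] at this h2
    rw [← this, ← h2, hab]
  -- the endomorphism
  refine ⟨f.comp (ι.comp e.toMonoidHom), hf.comp (hιinj.comp e.injective), ?_⟩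
  intro hsurj
  -- f is surjective, hence bijective
  have hfsurj : Function.Surjective f := by
    intro y
    obtain ⟨u, hu⟩ := hsurj y
    exact ⟨ι (e u), hu⟩
  -- the homomorphism φ : PresentedGroup rels' →* Multiplicative ℤ killing old generators
  have hφ : ∀ r' ∈ rels',
      FreeGroup.lift (Fin.snoc (fun _ : Fin n => (1 : Multiplicative ℤ))
        (Multiplicative.ofAdd 1)) r' = 1 := by
    rintro r' ⟨r, hr, rfl⟩
    rw [lift_map]
    have : ((Fin.snoc (fun _ : Fin n => (1 : Multiplicative ℤ)) (Multiplicative.ofAdd 1))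
        ∘ Fin.castSucc) = fun _ : Fin n => (1 : Multiplicative ℤ) := by
      funext i; simp [Fin.snoc_castSucc]
    rw [this]
    have h2 : FreeGroup.lift (fun _ : Fin n => (1 : Multiplicative ℤ))
        = (1 : FreeGroup (Fin n) →* Multiplicative ℤ) := by
      apply FreeGroup.ext_hom; intro a; simp
    rw [h2]; rfl
  set φ : PresentedGroup rels' →* Multiplicative ℤ := PresentedGroup.toGroup hφ with hφdef
  -- φ at the last generator is nontrivial
  have hφlast : φ (PresentedGroup.of (Fin.last n)) = Multiplicative.ofAdd 1 := by
    rw [hφdef, PresentedGroup.toGroup.of, Fin.snoc_last]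
  -- f bijective gives an iso
  have hfbij : Function.Bijective f := ⟨hf, hfsurj⟩
  set g := MulEquiv.ofBijective f hfbij with hg
  -- every hom from U to a commutative group is trivial
  have htrivhom : ∀ (h : U →* Multiplicative ℤ) (u : U), h u = 1 := by
    intro h u
    have : h u = (Abelianization.lift h) (Abelianization.of u) := rfl
    rw [this, Subsingleton.elim (Abelianization.of u) 1, map_one]
  have : φ (PresentedGroup.of (Fin.last n)) = 1 := by
    have := htrivhom (φ.comp g.symm.toMonoidHom) (g (PresentedGroup.of (Fin.last n)))
    simpa using this
  rw [hφlast] at this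
  exact one_ne_zero (by exact_mod_cast congrArg Multiplicative.toAdd this)
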